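/- Let μ be a compactly supported Borel probability measure on ℝ^d and let f : ℝ^d → ℝ be Lipschitz. Then, with both sides valued in the extended reals, sup_{ν ∈ P₁(ℝ^d)} ( ∫ f dν + W̄(ν, μ) ) = ∫ (−f)*(v) dμ(v), where (−f)*(v) := sup_{x∈ℝ^d} (⟨v,x⟩ + f(x)). -/

import Mathlib

open MeasureTheory

/-- `π` is a coupling of `μ` and `ν`: a probability measure on the product whose
marginals are `μ` and `ν`. -/
def IsCoupling {X : Type*} [MeasurableSpace X]
    (π : Measure (X × X)) (μ ν : Measure X) : Prop :=
  IsProbabilityMeasure π ∧ π.map Prod.fst = μ ∧ π.map Prod.snd = ν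

/-- The integral of a real-valued function exists in the extended reals: the lower integral of
its positive part or that of its negative part is finite. -/
def HasEIntegral {X : Type*} [MeasurableSpace X] (π : Measure X) (f : X → ℝ) : Prop :=
  (∫⁻ p, ENNReal.ofReal (f p) ∂π) ≠ ⊤ ∨ (∫⁻ p, ENNReal.ofReal (-(f p)) ∂π) ≠ ⊤

/-- The integral of a real-valued function in the extended reals. -/
noncomputable def eIntegral {X : Type*} [MeasurableSpace X] (π : Measure X) (f : X → ℝ) :
    EReal :=
  ((∫⁻ p, ENNReal.ofReal (f p) ∂π : ENNReal) : EReal)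
    - ((∫⁻ p, ENNReal.ofReal (-(f p)) ∂π : ENNReal) : EReal)

/-- The maximizing Wasserstein-type cost `W̄(ν,μ) = sup_π ∫ ⟨x,v⟩ dπ`, valued in the extended
reals; the supremum runs over couplings of `ν` and `μ` for which the integral exists. -/
noncomputable def Wupp {d : ℕ} (ν μ : Measure (EuclideanSpace ℝ (Fin d))) : EReal :=
  sSup {c : EReal | ∃ π : Measure (EuclideanSpace ℝ (Fin d) × EuclideanSpace ℝ (Fin d)),
    IsCoupling π ν μ ∧ HasEIntegral π (fun p => (inner ℝ p.1 p.2 : ℝ)) ∧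
    c = eIntegral π (fun p => (inner ℝ p.1 p.2 : ℝ))}

/-- The canonical map `EReal → ℝ≥0∞` sending `⊤ ↦ ⊤` and `x ↦ max x 0` otherwise. -/
noncomputable def erealToENNReal (x : EReal) : ENNReal :=
  if x = ⊤ then ⊤ else ENNReal.ofReal x.toReal

/-- The integral of an `EReal`-valued function, as an extended real number. -/
noncomputable def erealIntegral {X : Type*} [MeasurableSpace X]
    (μ : MeasureTheory.Measure X) (g : X → EReal) : EReal :=
  ((∫⁻ x, erealToENNReal (g x) ∂μ : ENNReal) : EReal)
    - ((∫⁻ x, erealToENNReal (-(g x)) ∂μ : ENNReal) : EReal)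

/-! ### Auxiliary lemmas about `erealToENNReal` -/

lemma erealToENNReal_coe (r : ℝ) : erealToENNReal (r : EReal) = ENNReal.ofReal r := by
  simp [erealToENNReal]

lemma erealToENNReal_mono : Monotone erealToENNReal := by
  intro x y hxy
  unfold erealToENNReal
  by_cases hy : y = ⊤
  · simp [hy]
  · have hx : x ≠ ⊤ := fun h => hy (top_le_iff.mp (h ▸ hxy))
    simp only [hx, hy, if_neg]
    by_cases hxb : x = ⊥
    · simp [hxb]
    · exact ENNReal.ofReal_le_ofReal (EReal.toReal_le_toReal hxy hxb hy)

lemma measurable_erealToENNReal : Measurable erealToENNReal :=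
  erealToENNReal_mono.measurable

lemma ofReal_le_erealToENNReal {r : ℝ} {y : EReal} (h : (r : EReal) ≤ y) :
    ENNReal.ofReal r ≤ erealToENNReal y := by
  rw [← erealToENNReal_coe r]; exact erealToENNReal_mono h

lemma erealToENNReal_neg_le {r : ℝ} {y : EReal} (h : (r : EReal) ≤ y) :
    erealToENNReal (-y) ≤ ENNReal.ofReal (-r) := by
  rw [← erealToENNReal_coe (-r)]
  exact erealToENNReal_mono (by rw [EReal.coe_neg]; exact EReal.neg_le_neg_iff.mpr h)

lemma max_half (x : ℝ) : max x 0 = (x + |x|) / 2 := by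
  rcases le_total x 0 with h | h
  · rw [max_eq_right h, abs_of_nonpos h]; ring
  · rw [max_eq_left h, abs_of_nonneg h]; ring

lemma ofReal_max (x : ℝ) : ENNReal.ofReal x = ENNReal.ofReal (max x 0) := by
  rcases le_total x 0 with h | h
  · rw [max_eq_right h, ENNReal.ofReal_of_nonpos h, ENNReal.ofReal_zero]
  · rw [max_eq_left h]

lemma ofReal_identity (a b : ℝ) :
    ENNReal.ofReal (a + b) + (ENNReal.ofReal (-a) + ENNReal.ofReal (-b))
      = ENNReal.ofReal (-(a + b)) + (ENNReal.ofReal a + ENNReal.ofReal b) := by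
  rw [ofReal_max (a+b), ofReal_max (-a), ofReal_max (-b), ofReal_max (-(a+b)),
    ofReal_max a, ofReal_max b,
    ← ENNReal.ofReal_add (le_max_right _ _) (le_max_right _ _),
    ← ENNReal.ofReal_add (le_max_right _ _) (by positivity),
    ← ENNReal.ofReal_add (le_max_right _ _) (le_max_right _ _),
    ← ENNReal.ofReal_add (le_max_right _ _) (by positivity)]
  congr 1
  simp only [max_half, abs_neg]
  ring

lemma ennreal_sub_eq {x y : ENNReal} (hx : x ≠ ⊤) (hy : y ≠ ⊤) :
    (x : EReal) - (y : EReal) = ((x.toReal - y.toReal : ℝ) : EReal) := by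
  have hx' : (x : EReal) = ((x.toReal : ℝ) : EReal) := by
    conv_rhs => rw [← EReal.toReal_coe_ennreal]
    exact (EReal.coe_toReal (by simpa using hx) (by simp)).symm
  have hy' : (y : EReal) = ((y.toReal : ℝ) : EReal) := by
    conv_rhs => rw [← EReal.toReal_coe_ennreal]
    exact (EReal.coe_toReal (by simpa using hy) (by simp)).symm
  rw [hx', hy', ← EReal.coe_sub]

lemma lintegral_ofReal_lt_top {α : Type*} [MeasurableSpace α] {π : Measure α}
    {h : α → ℝ} (hint : Integrable h π) : (∫⁻ p, ENNReal.ofReal (h p) ∂π) ≠ ⊤ := by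
  have : (∫⁻ p, ENNReal.ofReal (h p) ∂π) ≤ ∫⁻ p, ‖h p‖₊ ∂π := by
    apply lintegral_mono; intro p
    simp only [← enorm_eq_nnnorm, ← ofReal_norm, Real.norm_eq_abs]
    exact ENNReal.ofReal_le_ofReal (le_abs_self _)
  exact ((this.trans_lt hint.2).ne)

/-- The key one-sided estimate used for the easy direction of the duality. -/
lemma partA {α : Type*} [MeasurableSpace α] (π : Measure α)
    (h c : α → ℝ) (hh : Measurable h) (hc : Measurable c) (hint : Integrable h π)
    (G : α → EReal)
    (hle : ∀ p, ((h p + c p : ℝ) : EReal) ≤ G p)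
    (hN : (∫⁻ p, erealToENNReal (-(G p)) ∂π) ≠ ⊤) :
    ((∫ p, h p ∂π : ℝ) : EReal) + (((∫⁻ p, ENNReal.ofReal (c p) ∂π : ENNReal) : EReal)
      - ((∫⁻ p, ENNReal.ofReal (-(c p)) ∂π : ENNReal) : EReal))
    ≤ ((∫⁻ p, erealToENNReal (G p) ∂π : ENNReal) : EReal)
      - ((∫⁻ p, erealToENNReal (-(G p)) ∂π : ENNReal) : EReal) := by
  set A := ∫⁻ p, ENNReal.ofReal (c p) ∂π with hA_def
  set B := ∫⁻ p, ENNReal.ofReal (-(c p)) ∂π with hB_def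
  set C := ∫⁻ p, ENNReal.ofReal (h p + c p) ∂π with hC_def
  set D := ∫⁻ p, ENNReal.ofReal (-(h p + c p)) ∂π with hD_def
  set P := ∫⁻ p, ENNReal.ofReal (h p) ∂π with hP_def
  set Q := ∫⁻ p, ENNReal.ofReal (-(h p)) ∂π with hQ_def
  set M := ∫⁻ p, erealToENNReal (G p) ∂π with hM_def
  set N := ∫⁻ p, erealToENNReal (-(G p)) ∂π with hN_def
  have hP : P ≠ ⊤ := lintegral_ofReal_lt_top hint
  have hQ : Q ≠ ⊤ := lintegral_ofReal_lt_top hint.neg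
  have hmeas1 : Measurable fun p => ENNReal.ofReal (h p) := hh.ennreal_ofReal
  have hmeas2 : Measurable fun p => ENNReal.ofReal (-(h p)) := hh.neg.ennreal_ofReal
  have hmeas5 : Measurable fun p => ENNReal.ofReal (h p + c p) := (hh.add hc).ennreal_ofReal
  have hmeas6 : Measurable fun p => ENNReal.ofReal (-(h p + c p)) :=
    (hh.add hc).neg.ennreal_ofReal
  have hiden : C + (Q + B) = D + (P + A) := by
    rw [hC_def, hQ_def, hB_def, hD_def, hP_def, hA_def,
      ← lintegral_add_left hmeas2, ← lintegral_add_left hmeas5,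
      ← lintegral_add_left hmeas1, ← lintegral_add_left hmeas6]
    exact lintegral_congr fun p => by
      simpa [add_comm, add_left_comm] using ofReal_identity (h p) (c p)
  have hCM : C ≤ M := lintegral_mono fun p => ofReal_le_erealToENNReal (hle p)
  have hND : N ≤ D := lintegral_mono fun p => erealToENNReal_neg_le (hle p)
  have hr : ∫ p, h p ∂π = P.toReal - Q.toReal :=
    integral_eq_lintegral_pos_part_sub_lintegral_neg_part hint
  have hCtop : C = ⊤ → ((M : EReal) - (N : EReal)) = ⊤ := by
    intro hC
    have hM : M = ⊤ := top_le_iff.mp (hC ▸ hCM)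
    rw [hM, EReal.coe_ennreal_top, sub_eq_add_neg]
    apply EReal.top_add_of_ne_bot
    simp only [ne_eq, EReal.neg_eq_bot_iff, EReal.coe_ennreal_eq_top_iff]
    exact hN
  by_cases hB : B = ⊤
  · rw [hB]; simp [sub_eq_add_neg]
  · by_cases hA : A = ⊤
    · have hC : C = ⊤ := by
        by_contra hC
        have h1 : C + (Q + B) ≠ ⊤ := by
          simp [ENNReal.add_eq_top, hC, hQ, hB]
        rw [hiden] at h1
        simp [ENNReal.add_eq_top, hA] at h1
      rw [hCtop hC]; exact le_top
    · by_cases hD : D = ⊤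
      · have hC : C = ⊤ := by
          by_contra hC
          have h1 : C + (Q + B) ≠ ⊤ := by simp [ENNReal.add_eq_top, hC, hQ, hB]
          rw [hiden] at h1
          simp [ENNReal.add_eq_top, hD] at h1
        rw [hCtop hC]; exact le_top
      · by_cases hC : C = ⊤
        · rw [hCtop hC]; exact le_top
        · have htoReal : C.toReal + (Q.toReal + B.toReal) = D.toReal + (P.toReal + A.toReal) := by
            rw [← ENNReal.toReal_add hQ hB,
              ← ENNReal.toReal_add hC (by simp [ENNReal.add_eq_top, hQ, hB]),
              ← ENNReal.toReal_add hP hA,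
              ← ENNReal.toReal_add hD (by simp [ENNReal.add_eq_top, hP, hA]), hiden]
          calc ((∫ p, h p ∂π : ℝ) : EReal) + ((A : EReal) - (B : EReal))
              = ((C.toReal - D.toReal : ℝ) : EReal) := by
                rw [hr, ennreal_sub_eq hA hB, ← EReal.coe_add]
                norm_cast
                linarith
            _ = (C : EReal) - (D : EReal) := (ennreal_sub_eq hC hD).symm
            _ ≤ (M : EReal) - (N : EReal) := by
                rw [sub_eq_add_neg, sub_eq_add_neg]
                exact add_le_add (by exact_mod_cast hCM)
                  (EReal.neg_le_neg_iff.mpr (by exact_mod_cast hND))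

/-! ### A measurable selection by recursion over a dense sequence -/

section Aux
variable {E : Type*} [NormedAddCommGroup E] [InnerProductSpace ℝ E]

noncomputable def auxG (f : E → ℝ) (x : ℕ → E) : ℕ → E → ℝ
  | 0 => fun v => (inner ℝ v (x 0) : ℝ) + f (x 0)
  | n + 1 => fun v => max (auxG f x n v) ((inner ℝ v (x (n+1)) : ℝ) + f (x (n+1)))

noncomputable def auxS (f : E → ℝ) (x : ℕ → E) : ℕ → E → E
  | 0 => fun _ => x 0
  | n + 1 => fun v =>
      if auxG f x n v < (inner ℝ v (x (n+1)) : ℝ) + f (x (n+1)) then x (n+1) else auxS f x n v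

lemma auxG_eq (f : E → ℝ) (x : ℕ → E) : ∀ n v,
    auxG f x n v = (inner ℝ v (auxS f x n v) : ℝ) + f (auxS f x n v) := by
  intro n
  induction n with
  | zero => intro v; rfl
  | succ n ih =>
    intro v
    by_cases hcnd : auxG f x n v < (inner ℝ v (x (n+1)) : ℝ) + f (x (n+1))
    · simp only [auxG, auxS, if_pos hcnd, max_eq_right hcnd.le]
    · simp only [auxG, auxS, if_neg hcnd, max_eq_left (not_lt.mp hcnd)]
      exact ih v

lemma auxG_cont (f : E → ℝ) (x : ℕ → E) (n : ℕ) :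
    Continuous (fun v => auxG f x n v) := by
  induction n with
  | zero => exact (continuous_id.inner continuous_const).add continuous_const
  | succ n ih =>
    exact ih.max ((continuous_id.inner continuous_const).add continuous_const)

lemma auxS_meas [MeasurableSpace E] [OpensMeasurableSpace E]
    (f : E → ℝ) (x : ℕ → E) (n : ℕ) :
    Measurable (auxS f x n) := by
  induction n with
  | zero => exact measurable_const
  | succ n ih =>
    refine Measurable.ite ?_ measurable_const ih
    exact measurableSet_lt (auxG_cont f x n).measurable
      ((continuous_id.inner continuous_const).add continuous_const).measurable

lemma auxS_bound (f : E → ℝ) (x : ℕ → E) (n : ℕ) :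
    ∃ C : ℝ, 0 ≤ C ∧ ∀ v, ‖auxS f x n v‖ ≤ C := by
  induction n with
  | zero => exact ⟨‖x 0‖, norm_nonneg _, fun v => le_refl _⟩
  | succ n ih =>
    obtain ⟨C, hC0, hC⟩ := ih
    refine ⟨max C ‖x (n+1)‖, le_max_of_le_left hC0, fun v => ?_⟩
    simp only [auxS]
    split_ifs
    · exact le_max_right _ _
    · exact (hC v).trans (le_max_left _ _)

lemma auxG_mono (f : E → ℝ) (x : ℕ → E) (v : E) :
    Monotone (fun n => auxG f x n v) :=
  monotone_nat_of_le_succ fun n => le_max_left _ _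

lemma auxG_ge (f : E → ℝ) (x : ℕ → E) (v : E) :
    ∀ n, ∀ k ≤ n, (inner ℝ v (x k) : ℝ) + f (x k) ≤ auxG f x n v := by
  intro n
  induction n with
  | zero => intro k hk; rw [Nat.le_zero.mp hk]; exact le_refl _
  | succ n ih =>
    intro k hk
    rcases Nat.lt_succ_iff_lt_or_eq.mp (Nat.lt_succ_of_le hk) with h | h
    · exact (ih k (Nat.lt_succ_iff.mp h)).trans (le_max_left _ _)
    · rw [h]; exact le_max_right _ _

lemma sup_dense (f : E → ℝ) (hf : Continuous f) (x : ℕ → E) (hx : DenseRange x) (v : E) :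
    (⨆ y : E, (((inner ℝ v y : ℝ) + f y : ℝ) : EReal)) = ⨆ n, ((auxG f x n v : ℝ) : EReal) := by
  apply le_antisymm
  · apply iSup_le; intro y
    apply le_of_forall_lt; intro b hb
    induction b with
    | bot =>
      exact lt_of_lt_of_le (EReal.bot_lt_coe _)
        (le_iSup (fun n => ((auxG f x n v : ℝ) : EReal)) 0)
    | top => exact absurd hb (not_lt.mpr le_top)
    | coe b =>
      have hby : b < (inner ℝ v y : ℝ) + f y := by exact_mod_cast hb
      have hU : IsOpen {z : E | b < (inner ℝ v z : ℝ) + f z} :=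
        isOpen_lt continuous_const ((continuous_const.inner continuous_id).add hf)
      obtain ⟨n, hn⟩ := hx.exists_mem_open hU ⟨y, hby⟩
      have h1 : b < auxG f x n v := lt_of_lt_of_le hn (auxG_ge f x v n n le_rfl)
      exact lt_of_lt_of_le (by exact_mod_cast h1)
        (le_iSup (fun n => ((auxG f x n v : ℝ) : EReal)) n)
  · apply iSup_le; intro n
    rw [auxG_eq f x n v]
    exact le_iSup (fun y => (((inner ℝ v y : ℝ) + f y : ℝ) : EReal)) (auxS f x n v)

end Aux

/-! ### Supremum lemmas for `erealToENNReal` -/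

lemma ereal_sup_ofReal (a : ℕ → ℝ) :
    erealToENNReal (⨆ n, ((a n : ℝ) : EReal)) = ⨆ n, ENNReal.ofReal (a n) := by
  set S := ⨆ n, ((a n : ℝ) : EReal) with hS
  by_cases htop : S = ⊤
  · rw [htop]
    simp only [erealToENNReal, if_pos rfl]
    symm
    apply ENNReal.eq_top_of_forall_nnreal_le
    intro r
    have : ((r : ℝ) : EReal) < S := htop ▸ EReal.coe_lt_top _
    obtain ⟨n, hn⟩ := lt_iSup_iff.mp this
    have han : (r : ℝ) < a n := by exact_mod_cast hn
    calc (r : ENNReal) = ENNReal.ofReal (r : ℝ) := by simp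
      _ ≤ ENNReal.ofReal (a n) := ENNReal.ofReal_le_ofReal han.le
      _ ≤ _ := le_iSup (fun n => ENNReal.ofReal (a n)) n
  · have hbot : S ≠ ⊥ := by
      intro h
      have := le_iSup (fun n => ((a n : ℝ) : EReal)) 0
      rw [← hS, h, le_bot_iff] at this
      exact EReal.coe_ne_bot _ this
    have hSr : S = ((S.toReal : ℝ) : EReal) := (EReal.coe_toReal htop hbot).symm
    rw [hSr, erealToENNReal_coe]
    apply le_antisymm
    · apply ENNReal.le_of_forall_pos_le_add
      intro ε hε _
      have hε' : (0 : ℝ) < (ε : ℝ) := hε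
      have : ((S.toReal - (ε : ℝ) : ℝ) : EReal) < S := by
        rw [hSr]; exact_mod_cast sub_lt_self _ hε'
      obtain ⟨n, hn⟩ := lt_iSup_iff.mp this
      have han : S.toReal - (ε : ℝ) < a n := by exact_mod_cast hn
      calc ENNReal.ofReal S.toReal ≤ ENNReal.ofReal (a n + (ε : ℝ)) :=
            ENNReal.ofReal_le_ofReal (by linarith)
        _ ≤ ENNReal.ofReal (a n) + ENNReal.ofReal (ε : ℝ) := ENNReal.ofReal_add_le
        _ ≤ (⨆ n, ENNReal.ofReal (a n)) + ENNReal.ofReal (ε : ℝ) := by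
            gcongr; exact le_iSup (fun n => ENNReal.ofReal (a n)) n
        _ = (⨆ n, ENNReal.ofReal (a n)) + (ε : ENNReal) := by
            rw [ENNReal.ofReal_coe_nnreal]
    · apply iSup_le
      intro n
      apply ENNReal.ofReal_le_ofReal
      have h1 : ((a n : ℝ) : EReal) ≤ S := le_iSup (fun n => ((a n : ℝ) : EReal)) n
      rw [hSr] at h1
      exact_mod_cast h1

lemma ereal_sup_neg (a : ℕ → ℝ) :
    erealToENNReal (-(⨆ n, ((a n : ℝ) : EReal))) = ⨅ n, ENNReal.ofReal (-(a n)) := by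
  set S := ⨆ n, ((a n : ℝ) : EReal) with hS
  by_cases htop : S = ⊤
  · rw [htop]
    have h0 : ∃ n, 0 ≤ a n := by
      have : ((0 : ℝ) : EReal) < S := htop ▸ EReal.coe_lt_top _
      obtain ⟨n, hn⟩ := lt_iSup_iff.mp this
      exact ⟨n, by exact_mod_cast hn.le⟩
    obtain ⟨n, hn⟩ := h0
    have hL : erealToENNReal (-(⊤ : EReal)) = 0 := by
      simp [erealToENNReal, EReal.neg_top]
    have hR : (⨅ n, ENNReal.ofReal (-(a n))) = 0 := by
      refine le_antisymm ((iInf_le _ n).trans ?_) zero_le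
      simp [ENNReal.ofReal_of_nonpos (by linarith : -(a n) ≤ 0)]
    rw [hL, hR]
  · have hbot : S ≠ ⊥ := by
      intro h
      have := le_iSup (fun n => ((a n : ℝ) : EReal)) 0
      rw [← hS, h, le_bot_iff] at this
      exact EReal.coe_ne_bot _ this
    have hSr : S = ((S.toReal : ℝ) : EReal) := (EReal.coe_toReal htop hbot).symm
    rw [hSr, ← EReal.coe_neg, erealToENNReal_coe]
    apply le_antisymm
    · apply le_iInf
      intro n
      apply ENNReal.ofReal_le_ofReal
      have h1 : ((a n : ℝ) : EReal) ≤ S := le_iSup (fun n => ((a n : ℝ) : EReal)) n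
      rw [hSr] at h1
      have h2 := EReal.coe_le_coe_iff.mp h1
      linarith
    · apply ENNReal.le_of_forall_pos_le_add
      intro ε hε _
      have hε' : (0 : ℝ) < (ε : ℝ) := hε
      have : ((S.toReal - (ε : ℝ) : ℝ) : EReal) < S := by
        rw [hSr]; exact_mod_cast sub_lt_self _ hε'
      obtain ⟨n, hn⟩ := lt_iSup_iff.mp this
      have han : S.toReal - (ε : ℝ) < a n := by exact_mod_cast hn
      calc (⨅ n, ENNReal.ofReal (-(a n))) ≤ ENNReal.ofReal (-(a n)) := iInf_le _ n
        _ ≤ ENNReal.ofReal (-S.toReal + (ε : ℝ)) := ENNReal.ofReal_le_ofReal (by linarith)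
        _ ≤ ENNReal.ofReal (-S.toReal) + ENNReal.ofReal (ε : ℝ) := ENNReal.ofReal_add_le
        _ = ENNReal.ofReal (-S.toReal) + (ε : ENNReal) := by
            rw [ENNReal.ofReal_coe_nnreal]

/-- lemma of Section 3.2 of the paper: for a compactly supported Borel
probability measure `μ` on `ℝ^d` and Lipschitz `f`,
`sup_{ν ∈ P₁} ( ∫ f dν + W̄(ν,μ) ) = ∫ (−f)* dμ`, where `(−f)*(v) = sup_x (⟨v,x⟩ + f(x))`. -/
theorem stmt_6 (d : ℕ) (hd : 1 ≤ d) (μ : Measure (EuclideanSpace ℝ (Fin d)))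
    [IsProbabilityMeasure μ]
    (hsupp : ∃ K : Set (EuclideanSpace ℝ (Fin d)), IsCompact K ∧ μ Kᶜ = 0)
    (f : EuclideanSpace ℝ (Fin d) → ℝ) (K : NNReal) (hf : LipschitzWith K f) :
    sSup {c : EReal | ∃ ν : Measure (EuclideanSpace ℝ (Fin d)),
        IsProbabilityMeasure ν ∧ Integrable (fun x => ‖x‖) ν ∧
        c = ((∫ x, f x ∂ν : ℝ) : EReal) + Wupp ν μ}
      = erealIntegral μ (fun v => ⨆ x : EuclideanSpace ℝ (Fin d),
          (((inner ℝ v x : ℝ) + f x : ℝ) : EReal)) := by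
  classical
  obtain ⟨Kset, hKc, hKnull⟩ := hsupp
  obtain ⟨Rk', hRk'⟩ := hKc.isBounded.subset_closedBall (0 : EuclideanSpace ℝ (Fin d))
  set R0 : ℝ := max Rk' 0 with hR0_def
  have hR0 : 0 ≤ R0 := le_max_right _ _
  have hKR : Kset ⊆ Metric.closedBall 0 R0 :=
    hRk'.trans (Metric.closedBall_subset_closedBall (le_max_left _ _))
  have hae : ∀ᵐ v ∂μ, ‖v‖ ≤ R0 := by
    rw [ae_iff]
    refine measure_mono_null (fun v hv => ?_) hKnull
    intro hvK
    exact hv (by simpa [Metric.mem_closedBall, dist_zero_right] using hKR hvK)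
  obtain ⟨x, hx⟩ := TopologicalSpace.exists_dense_seq (EuclideanSpace ℝ (Fin d))
  set g : EuclideanSpace ℝ (Fin d) → EReal :=
    fun v => ⨆ y : EuclideanSpace ℝ (Fin d), (((inner ℝ v y : ℝ) + f y : ℝ) : EReal) with hg_def
  have hgG : ∀ v, g v = ⨆ n, ((auxG f x n v : ℝ) : EReal) :=
    fun v => sup_dense f hf.continuous x hx v
  have hgmeas : Measurable g := by
    have h1 : g = fun v => ⨆ n, ((auxG f x n v : ℝ) : EReal) := funext hgG
    rw [h1]
    exact Measurable.iSup fun n =>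
      measurable_coe_real_ereal.comp (auxG_cont f x n).measurable
  have hg_lower : ∀ v, ((f 0 : ℝ) : EReal) ≤ g v := by
    intro v
    have h1 := le_iSup
      (fun y => (((inner ℝ v y : ℝ) + f y : ℝ) : EReal)) (0 : EuclideanSpace ℝ (Fin d))
    simpa [hg_def] using h1
  have hf_bound : ∀ y, |f y| ≤ |f 0| + K * ‖y‖ := by
    intro y
    have h1 : |f y - f 0| ≤ K * ‖y‖ := by
      have h2 := hf.dist_le_mul y 0
      rwa [Real.dist_eq, dist_zero_right] at h2
    calc |f y| = |f 0 + (f y - f 0)| := by congr 1; ring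
      _ ≤ |f 0| + |f y - f 0| := abs_add_le _ _
      _ ≤ |f 0| + K * ‖y‖ := by linarith
  apply le_antisymm
  · -- easy direction: sup ≤ integral
    apply sSup_le
    rintro c ⟨ν, hνp, hνint, rfl⟩
    haveI := hνp
    have hfν : Integrable f ν := by
      refine Integrable.mono' ((integrable_const |f 0|).add (hνint.const_mul (K : ℝ)))
        hf.continuous.aestronglyMeasurable (ae_of_all _ fun y => ?_)
      simpa [Real.norm_eq_abs] using hf_bound y
    set r : ℝ := ∫ x, f x ∂ν with hr_def
    have hW : Wupp ν μ ≤ erealIntegral μ g - (r : EReal) := by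
      apply sSup_le
      rintro c' ⟨π, ⟨hπp, hπ1, hπ2⟩, hHas, rfl⟩
      haveI := hπp
      rw [EReal.le_sub_iff_add_le (Or.inl (EReal.coe_ne_bot r)) (Or.inl (EReal.coe_ne_top r)),
        add_comm]
      have hh : Measurable fun p : EuclideanSpace ℝ (Fin d) × EuclideanSpace ℝ (Fin d) =>
          f p.1 := hf.continuous.measurable.comp measurable_fst
      have hcm : Measurable fun p : EuclideanSpace ℝ (Fin d) × EuclideanSpace ℝ (Fin d) =>
          (inner ℝ p.1 p.2 : ℝ) := (continuous_fst.inner continuous_snd).measurable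
      have hintf : Integrable (fun p : EuclideanSpace ℝ (Fin d) × EuclideanSpace ℝ (Fin d) =>
          f p.1) π := by
        rw [← hπ1] at hfν
        rwa [integrable_map_measure hf.continuous.aestronglyMeasurable
          measurable_fst.aemeasurable] at hfν
      have hreq : (∫ p : EuclideanSpace ℝ (Fin d) × EuclideanSpace ℝ (Fin d),
          f p.1 ∂π) = r := by
        rw [hr_def, ← hπ1,
          integral_map measurable_fst.aemeasurable hf.continuous.aestronglyMeasurable]
      have hle : ∀ p : EuclideanSpace ℝ (Fin d) × EuclideanSpace ℝ (Fin d),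
          ((f p.1 + (inner ℝ p.1 p.2 : ℝ) : ℝ) : EReal) ≤ g p.2 := by
        intro p
        have h1 := le_iSup (fun y => (((inner ℝ p.2 y : ℝ) + f y : ℝ) : EReal)) p.1
        have h2 : f p.1 + (inner ℝ p.1 p.2 : ℝ) = (inner ℝ p.2 p.1 : ℝ) + f p.1 := by
          rw [real_inner_comm]; ring
        rw [hg_def, h2]
        exact h1
      have hNfin : (∫⁻ p, erealToENNReal (-(g p.2)) ∂π) ≠ ⊤ := by
        have hb : (∫⁻ p, erealToENNReal (-(g p.2)) ∂π) ≤
            ∫⁻ _p, ENNReal.ofReal (-(f 0)) ∂π :=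
          lintegral_mono (fun p => erealToENNReal_neg_le (hg_lower p.2))
        rw [lintegral_const, measure_univ, mul_one] at hb
        exact (hb.trans_lt ENNReal.ofReal_lt_top).ne
      have hmain := partA π (fun p => f p.1) (fun p => (inner ℝ p.1 p.2 : ℝ)) hh hcm hintf
        (fun p => g p.2) hle hNfin
      have hMeq : (∫⁻ p, erealToENNReal (g p.2) ∂π) = ∫⁻ v, erealToENNReal (g v) ∂μ := by
        rw [← hπ2]
        exact (lintegral_map (measurable_erealToENNReal.comp hgmeas) measurable_snd).symm
      have hNeq : (∫⁻ p, erealToENNReal (-(g p.2)) ∂π) = ∫⁻ v, erealToENNReal (-(g v)) ∂μ := by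
        rw [← hπ2]
        exact (lintegral_map (measurable_erealToENNReal.comp hgmeas.neg) measurable_snd).symm
      rw [hMeq, hNeq, hreq] at hmain
      exact hmain
    calc ((r : ℝ) : EReal) + Wupp ν μ
        ≤ (r : EReal) + (erealIntegral μ g - (r : EReal)) := add_le_add_right hW _
      _ = erealIntegral μ g := by rw [add_comm, EReal.sub_add_cancel]
  · -- hard direction: integral ≤ sup
    set m : ℕ → ENNReal := fun n => ∫⁻ v, ENNReal.ofReal (auxG f x n v) ∂μ with hm_def
    set q : ℕ → ENNReal := fun n => ∫⁻ v, ENNReal.ofReal (-(auxG f x n v)) ∂μ with hq_def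
    have hGb : ∀ n, ∃ C : ℝ, 0 ≤ C ∧ ∀ v, ‖v‖ ≤ R0 → |auxG f x n v| ≤ C := by
      intro n
      obtain ⟨C, hC0, hC⟩ := auxS_bound f x n
      refine ⟨C * R0 + (|f 0| + K * C), by positivity, fun v hv => ?_⟩
      rw [auxG_eq f x n v]
      have h1 : |(inner ℝ v (auxS f x n v) : ℝ)| ≤ C * R0 := by
        calc |(inner ℝ v (auxS f x n v) : ℝ)| ≤ ‖v‖ * ‖auxS f x n v‖ :=
              abs_real_inner_le_norm _ _
          _ ≤ R0 * C := mul_le_mul hv (hC v) (norm_nonneg _) hR0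
          _ = C * R0 := mul_comm _ _
      have h2 : |f (auxS f x n v)| ≤ |f 0| + K * C := by
        have h4 := hf_bound (auxS f x n v)
        have h3 : (K : ℝ) * ‖auxS f x n v‖ ≤ K * C :=
          mul_le_mul_of_nonneg_left (hC v) (by positivity)
        linarith
      calc |(inner ℝ v (auxS f x n v) : ℝ) + f (auxS f x n v)|
          ≤ |(inner ℝ v (auxS f x n v) : ℝ)| + |f (auxS f x n v)| := abs_add_le _ _
        _ ≤ C * R0 + (|f 0| + K * C) := add_le_add h1 h2
    have hm_fin : ∀ n, m n ≠ ⊤ := by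
      intro n
      obtain ⟨C, hC0, hC⟩ := hGb n
      have hb : m n ≤ ∫⁻ _v, ENNReal.ofReal C ∂μ := by
        apply lintegral_mono_ae
        filter_upwards [hae] with v hv
        exact ENNReal.ofReal_le_ofReal ((le_abs_self _).trans (hC v hv))
      rw [lintegral_const, measure_univ, mul_one] at hb
      exact (hb.trans_lt ENNReal.ofReal_lt_top).ne
    have hq_fin : ∀ n, q n ≠ ⊤ := by
      intro n
      obtain ⟨C, hC0, hC⟩ := hGb n
      have hb : q n ≤ ∫⁻ _v, ENNReal.ofReal C ∂μ := by
        apply lintegral_mono_ae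
        filter_upwards [hae] with v hv
        exact ENNReal.ofReal_le_ofReal ((neg_le_abs _).trans (hC v hv))
      rw [lintegral_const, measure_univ, mul_one] at hb
      exact (hb.trans_lt ENNReal.ofReal_lt_top).ne
    have hm_mono : ∀ i j, i ≤ j → m i ≤ m j := fun i j hij =>
      lintegral_mono fun v => ENNReal.ofReal_le_ofReal (auxG_mono f x v hij)
    have hq_anti : ∀ i j, i ≤ j → q j ≤ q i := fun i j hij =>
      lintegral_mono fun v => ENNReal.ofReal_le_ofReal (neg_le_neg (auxG_mono f x v hij))
    have hMeq : (∫⁻ v, erealToENNReal (g v) ∂μ) = ⨆ n, m n := by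
      calc (∫⁻ v, erealToENNReal (g v) ∂μ)
          = ∫⁻ v, ⨆ n, ENNReal.ofReal (auxG f x n v) ∂μ := by
            apply lintegral_congr; intro v
            rw [hgG v, ereal_sup_ofReal]
        _ = ⨆ n, m n := by
            apply lintegral_iSup
            · exact fun n => (auxG_cont f x n).measurable.ennreal_ofReal
            · intro i j hij v
              exact ENNReal.ofReal_le_ofReal (auxG_mono f x v hij)
    have hNEq : (∫⁻ v, erealToENNReal (-(g v)) ∂μ) = ⨅ n, q n := by
      calc (∫⁻ v, erealToENNReal (-(g v)) ∂μ)
          = ∫⁻ v, ⨅ n, ENNReal.ofReal (-(auxG f x n v)) ∂μ := by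
            apply lintegral_congr; intro v
            rw [hgG v, ereal_sup_neg]
        _ = ⨅ n, q n := by
            apply lintegral_iInf
            · exact fun n => (auxG_cont f x n).measurable.neg.ennreal_ofReal
            · intro i j hij v
              exact ENNReal.ofReal_le_ofReal (neg_le_neg (auxG_mono f x v hij))
            · exact hq_fin 0
    have hNtop : (⨅ n, q n) ≠ ⊤ := fun h => hq_fin 0 (top_le_iff.mp (h ▸ iInf_le q 0))
    have hkey : ∀ n : ℕ, (((m n).toReal - (q n).toReal : ℝ) : EReal) ≤
        sSup {c : EReal | ∃ ν : Measure (EuclideanSpace ℝ (Fin d)),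
          IsProbabilityMeasure ν ∧ Integrable (fun x => ‖x‖) ν ∧
          c = ((∫ x, f x ∂ν : ℝ) : EReal) + Wupp ν μ} := by
      intro n
      obtain ⟨C, hC0, hC⟩ := auxS_bound f x n
      have hsmeas : Measurable (auxS f x n) := auxS_meas f x n
      set sn := auxS f x n with hsn
      set νn := μ.map sn with hνn
      haveI hνnp : IsProbabilityMeasure νn := Measure.isProbabilityMeasure_map hsmeas.aemeasurable
      have hsnorm : Integrable (fun v => ‖sn v‖) μ :=
        Integrable.mono' (integrable_const C) hsmeas.norm.aestronglyMeasurable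
          (ae_of_all _ fun v => by simpa using hC v)
      have hνint : Integrable (fun y => ‖y‖) νn := by
        rw [hνn, integrable_map_measure measurable_norm.aestronglyMeasurable
          hsmeas.aemeasurable]
        exact hsnorm
      have hpair : Measurable fun v => (sn v, v) := hsmeas.prodMk measurable_id
      set πn := μ.map (fun v => (sn v, v)) with hπn
      haveI : IsProbabilityMeasure πn := Measure.isProbabilityMeasure_map hpair.aemeasurable
      have hcpl : IsCoupling πn νn μ := by
        refine ⟨inferInstance, ?_, ?_⟩
        · rw [hπn, Measure.map_map measurable_fst hpair]
          have h1 : (Prod.fst ∘ fun v => (sn v, v)) = sn := rfl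
          rw [h1]
        · rw [hπn, Measure.map_map measurable_snd hpair]
          have h1 : (Prod.snd ∘ fun v => (sn v, v)) = id := rfl
          rw [h1, Measure.map_id]
      have hcn_meas : Measurable fun v => (inner ℝ (sn v) v : ℝ) := hsmeas.inner measurable_id
      have hcn_bound : ∀ᵐ v ∂μ, ‖(inner ℝ (sn v) v : ℝ)‖ ≤ C * R0 := by
        filter_upwards [hae] with v hv
        rw [Real.norm_eq_abs]
        calc |(inner ℝ (sn v) v : ℝ)| ≤ ‖sn v‖ * ‖v‖ := abs_real_inner_le_norm _ _
          _ ≤ C * R0 := mul_le_mul (hC v) hv (norm_nonneg _) hC0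
      have hcn_int : Integrable (fun v => (inner ℝ (sn v) v : ℝ)) μ :=
        Integrable.mono' (integrable_const (C * R0)) hcn_meas.aestronglyMeasurable hcn_bound
      have hfsn_int : Integrable (fun v => f (sn v)) μ := by
        refine Integrable.mono' (integrable_const (|f 0| + K * C))
          (hf.continuous.measurable.comp hsmeas).aestronglyMeasurable (ae_of_all _ fun v => ?_)
        rw [Real.norm_eq_abs]
        have h3 : (K : ℝ) * ‖sn v‖ ≤ K * C := mul_le_mul_of_nonneg_left (hC v) (by positivity)
        have h4 := hf_bound (sn v)
        linarith
      have hA : (∫⁻ p : EuclideanSpace ℝ (Fin d) × EuclideanSpace ℝ (Fin d),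
          ENNReal.ofReal (inner ℝ p.1 p.2 : ℝ) ∂πn)
          = ∫⁻ v, ENNReal.ofReal (inner ℝ (sn v) v : ℝ) ∂μ := by
        rw [hπn]
        exact lintegral_map ((continuous_fst.inner continuous_snd).measurable.ennreal_ofReal)
          hpair
      have hB : (∫⁻ p : EuclideanSpace ℝ (Fin d) × EuclideanSpace ℝ (Fin d),
          ENNReal.ofReal (-(inner ℝ p.1 p.2 : ℝ)) ∂πn)
          = ∫⁻ v, ENNReal.ofReal (-(inner ℝ (sn v) v : ℝ)) ∂μ := by
        rw [hπn]
        exact lintegral_map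
          ((continuous_fst.inner continuous_snd).measurable.neg.ennreal_ofReal) hpair
      have hHasE : HasEIntegral πn (fun p => (inner ℝ p.1 p.2 : ℝ)) :=
        Or.inl (by rw [hA]; exact lintegral_ofReal_lt_top hcn_int)
      have heI : eIntegral πn (fun p => (inner ℝ p.1 p.2 : ℝ))
          = ((∫ v, (inner ℝ (sn v) v : ℝ) ∂μ : ℝ) : EReal) := by
        have hA' : (∫⁻ v, ENNReal.ofReal (inner ℝ (sn v) v : ℝ) ∂μ) ≠ ⊤ :=
          lintegral_ofReal_lt_top hcn_int
        have hB' : (∫⁻ v, ENNReal.ofReal (-(inner ℝ (sn v) v : ℝ)) ∂μ) ≠ ⊤ :=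
          lintegral_ofReal_lt_top hcn_int.neg
        unfold eIntegral
        rw [hA, hB, ennreal_sub_eq hA' hB',
          integral_eq_lintegral_pos_part_sub_lintegral_neg_part hcn_int]
      have hWn : ((∫ v, (inner ℝ (sn v) v : ℝ) ∂μ : ℝ) : EReal) ≤ Wupp νn μ := by
        rw [← heI]
        exact le_sSup ⟨πn, hcpl, hHasE, rfl⟩
      have hfν_eq : (∫ y, f y ∂νn) = ∫ v, f (sn v) ∂μ := by
        rw [hνn, integral_map hsmeas.aemeasurable hf.continuous.aestronglyMeasurable]
      have hGfun : (fun v => auxG f x n v) = fun v => f (sn v) + (inner ℝ (sn v) v : ℝ) := by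
        funext v
        rw [auxG_eq f x n v, real_inner_comm]
        ring
      have hGint : Integrable (fun v => auxG f x n v) μ := by
        rw [hGfun]; exact hfsn_int.add hcn_int
      have hmq : (m n).toReal - (q n).toReal = ∫ v, auxG f x n v ∂μ :=
        (integral_eq_lintegral_pos_part_sub_lintegral_neg_part hGint).symm
      have hsum : ∫ v, auxG f x n v ∂μ
          = (∫ v, f (sn v) ∂μ) + ∫ v, (inner ℝ (sn v) v : ℝ) ∂μ := by
        rw [hGfun, integral_add hfsn_int hcn_int]
      refine le_trans ?_ (le_sSup ⟨νn, hνnp, hνint, rfl⟩)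
      calc (((m n).toReal - (q n).toReal : ℝ) : EReal)
          = ((∫ v, f (sn v) ∂μ + ∫ v, (inner ℝ (sn v) v : ℝ) ∂μ : ℝ) : EReal) := by
            rw [hmq, hsum]
        _ = ((∫ y, f y ∂νn : ℝ) : EReal) + ((∫ v, (inner ℝ (sn v) v : ℝ) ∂μ : ℝ) : EReal) := by
            rw [hfν_eq]; exact EReal.coe_add _ _
        _ ≤ ((∫ y, f y ∂νn : ℝ) : EReal) + Wupp νn μ := add_le_add_right hWn _
    -- conclude
    show erealIntegral μ g ≤ _
    unfold erealIntegral
    rw [hMeq, hNEq]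
    by_cases hMtop : (⨆ n, m n) = ⊤
    · have hStop : sSup {c : EReal | ∃ ν : Measure (EuclideanSpace ℝ (Fin d)),
          IsProbabilityMeasure ν ∧ Integrable (fun x => ‖x‖) ν ∧
          c = ((∫ x, f x ∂ν : ℝ) : EReal) + Wupp ν μ} = ⊤ := by
        rw [EReal.eq_top_iff_forall_lt]
        intro b
        have h1 : ENNReal.ofReal (max (b + (q 0).toReal) 0 + 1) < ⨆ n, m n := by
          rw [hMtop]; exact ENNReal.ofReal_lt_top
        obtain ⟨n, hn⟩ := lt_iSup_iff.mp h1
        have hmn : max (b + (q 0).toReal) 0 + 1 ≤ (m n).toReal := by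
          have h2 := (ENNReal.toReal_lt_toReal ENNReal.ofReal_ne_top (hm_fin n)).mpr hn
          rw [ENNReal.toReal_ofReal (by positivity)] at h2
          linarith
        have hqn : (q n).toReal ≤ (q 0).toReal :=
          ENNReal.toReal_mono (hq_fin 0) (hq_anti 0 n (Nat.zero_le n))
        refine lt_of_lt_of_le ?_ (hkey n)
        have h5 : b < (m n).toReal - (q n).toReal := by
          have h6 := le_max_left (b + (q 0).toReal) 0
          linarith
        exact_mod_cast h5
      rw [hStop]; exact le_top
    · rw [ennreal_sub_eq hMtop hNtop]
      apply le_of_forall_lt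
      intro b hb
      induction b with
      | bot => exact lt_of_lt_of_le (EReal.bot_lt_coe _) (hkey 0)
      | top => exact absurd hb (not_lt.mpr le_top)
      | coe b =>
        have hb' : b < (⨆ n, m n).toReal - (⨅ n, q n).toReal := by exact_mod_cast hb
        set Mt := (⨆ n, m n).toReal with hMt_def
        set Nt := (⨅ n, q n).toReal with hNt_def
        set ε : ℝ := (Mt - Nt - b) / 3 with hε_def
        have hε : 0 < ε := by rw [hε_def]; linarith
        have hn1 : ∃ n1, Mt - ε < (m n1).toReal := by
          by_contra hcon
          push_neg at hcon
          have hle2 : ∀ n, m n ≤ ENNReal.ofReal (Mt - ε) := fun n => by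
            rw [← ENNReal.ofReal_toReal (hm_fin n)]
            exact ENNReal.ofReal_le_ofReal (hcon n)
          have h3 : (⨆ n, m n) ≤ ENNReal.ofReal (Mt - ε) := iSup_le hle2
          have h4 : Mt ≤ max (Mt - ε) 0 := by
            have h7 := ENNReal.toReal_mono ENNReal.ofReal_ne_top h3
            rwa [ENNReal.toReal_ofReal'] at h7
          have h5 : 0 ≤ (m 0).toReal := ENNReal.toReal_nonneg
          have h6 := hcon 0
          rcases le_total (Mt - ε) 0 with hcc | hcc
          · rw [max_eq_right hcc] at h4; linarith
          · rw [max_eq_left hcc] at h4; linarith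
        obtain ⟨n1, hn1⟩ := hn1
        have hn2 : ∃ n2, (q n2).toReal < Nt + ε := by
          have h7 : (⨅ n, q n) < (⨅ n, q n) + ENNReal.ofReal ε :=
            ENNReal.lt_add_right hNtop (by simp [ENNReal.ofReal_eq_zero]; linarith)
          obtain ⟨n2, hn2⟩ := iInf_lt_iff.mp h7
          refine ⟨n2, ?_⟩
          have h8 := (ENNReal.toReal_lt_toReal (hq_fin n2)
            (ENNReal.add_ne_top.mpr ⟨hNtop, ENNReal.ofReal_ne_top⟩)).mpr hn2
          rwa [ENNReal.toReal_add hNtop ENNReal.ofReal_ne_top,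
            ENNReal.toReal_ofReal hε.le] at h8
        obtain ⟨n2, hn2⟩ := hn2
        set n := max n1 n2 with hn_def
        have hmono_m : (m n1).toReal ≤ (m n).toReal :=
          ENNReal.toReal_mono (hm_fin n) (hm_mono n1 n (le_max_left _ _))
        have hanti_q : (q n).toReal ≤ (q n2).toReal :=
          ENNReal.toReal_mono (hq_fin n2) (hq_anti n2 n (le_max_right _ _))
        refine lt_of_lt_of_le ?_ (hkey n)
        have h9 : b < (m n).toReal - (q n).toReal := by
          rw [hε_def] at hn1 hn2
          linarith
        exact_mod_cast h9
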